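/- arXiv:2201.01937 — 2 statements merged into one kernel-verified Lean document; each statement's English description precedes it below -/
import Mathlib

section
/- Let d ≥ 1, let γ⁰,…,γᵈ be Dirac matrices, m > 0, T > 0, and let F : ℂ^{d₀} → ℂ^{d₀} be holomorphic (complex-differentiable) with complex derivative F′(u) ∈ M_{d₀}(ℂ). Suppose ψ : (−T,T) × ℝ^d → ℂ^{d₀} is twice continuously differentiable, 2π-periodic in each spatial variable, and solves the Dirac equation −i Σ_{μ=0}^d γ^μ ∂ψ/∂x^μ + m ψ = F(ψ) pointwise (with x⁰ = t). Then ψ solves pointwise the Klein–Gordon type equation ∂²ψ/∂t² − Δψ + m²ψ = G(ψ, ∂ψ), where G(ψ,∂ψ) := m F(ψ) + i Σ_{j=1}^d γʲ F′(ψ) (∂ψ/∂xʲ) − i Σ_{j=1}^d γ⁰ F′(ψ) γ⁰ γʲ (∂ψ/∂xʲ) + m γ⁰ F′(ψ) γ⁰ ψ − γ⁰ F′(ψ) γ⁰ F(ψ). -/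
open Matrix
open scoped BigOperators

noncomputable section

/-- The Minkowski metric `η` on indices `0, 1, …, d`. -/
def eta (d : ℕ) (μ ν : Fin (d + 1)) : ℝ :=
  if μ = ν then (if μ = (0 : Fin (d + 1)) then 1 else -1) else 0

/-- A family `γ⁰, γ¹, …, γᵈ` of Dirac matrices. -/
def IsDiracFamily (d d0 : ℕ) (γ : Fin (d + 1) → Matrix (Fin d0) (Fin d0) ℂ) : Prop :=
  ∀ μ ν : Fin (d + 1),
    γ μ * γ ν + γ ν * γ μ = ((2 * eta d μ ν : ℝ) : ℂ) • (1 : Matrix (Fin d0) (Fin d0) ℂ)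

/-- The partial derivative `∂ψ/∂t` (with respect to the variable `x⁰ = t`). -/
def ptderiv (d d0 : ℕ) (ψ : ℝ × (Fin d → ℝ) → Fin d0 → ℂ) (p : ℝ × (Fin d → ℝ)) :
    Fin d0 → ℂ :=
  fderiv ℝ ψ p (1, 0)

/-- The partial derivative `∂ψ/∂xʲ` in the `j`-th spatial direction. -/
def pxderiv (d d0 : ℕ) (j : Fin d) (ψ : ℝ × (Fin d → ℝ) → Fin d0 → ℂ)
    (p : ℝ × (Fin d → ℝ)) : Fin d0 → ℂ :=
  fderiv ℝ ψ p (0, Pi.single j 1)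

/-- The nonlinearity
`G(ψ,∂ψ) = m F(ψ) + i Σ γʲ F′(ψ) ∂ⱼψ − i Σ γ⁰ F′(ψ) γ⁰ γʲ ∂ⱼψ + m γ⁰ F′(ψ) γ⁰ ψ − γ⁰ F′(ψ) γ⁰ F(ψ)`. -/
def GTerm (d d0 : ℕ) (γ : Fin (d + 1) → Matrix (Fin d0) (Fin d0) ℂ) (m : ℝ)
    (F : (Fin d0 → ℂ) → Fin d0 → ℂ) (F' : (Fin d0 → ℂ) → Matrix (Fin d0) (Fin d0) ℂ)
    (ψ : ℝ × (Fin d → ℝ) → Fin d0 → ℂ) (p : ℝ × (Fin d → ℝ)) : Fin d0 → ℂ :=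
  (m : ℂ) • F (ψ p)
    + Complex.I • ∑ j : Fin d, (γ j.succ * F' (ψ p)).mulVec (pxderiv d d0 j ψ p)
    - Complex.I • ∑ j : Fin d, (γ 0 * F' (ψ p) * γ 0 * γ j.succ).mulVec (pxderiv d d0 j ψ p)
    + (m : ℂ) • (γ 0 * F' (ψ p) * γ 0).mulVec (ψ p)
    - (γ 0 * F' (ψ p) * γ 0).mulVec (F (ψ p))

/-- Matrix multiplication as a continuous `ℝ`-linear map on `Fin n → ℂ`. -/
def matCLM {n : ℕ} (M : Matrix (Fin n) (Fin n) ℂ) : (Fin n → ℂ) →L[ℝ] (Fin n → ℂ) :=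
  (LinearMap.toContinuousLinearMap (Matrix.mulVecLin M)).restrictScalars ℝ

@[simp] lemma matCLM_apply {n : ℕ} (M : Matrix (Fin n) (Fin n) ℂ) (v : Fin n → ℂ) :
    matCLM M v = M.mulVec v := rfl

lemma dirac_double_sum {N n : ℕ} (g : Fin n → Matrix (Fin N) (Fin N) ℂ)
    (H : Fin n → Fin n → Fin N → ℂ)
    (hgg : ∀ j k, g j * g k + g k * g j
      = if j = k then ((-2 : ℂ) • 1 : Matrix (Fin N) (Fin N) ℂ) else 0)
    (hH : ∀ j k, H j k = H k j) :
    ∑ j, ∑ k, (g j * g k).mulVec (H j k) = -∑ j, H j j := by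
  have h2 : (2:ℂ) • ∑ j, ∑ k, (g j * g k).mulVec (H j k)
      = (2:ℂ) • (-∑ j, H j j) := by
    have hswap : ∑ j, ∑ k, (g j * g k).mulVec (H j k)
        = ∑ j, ∑ k, (g k * g j).mulVec (H j k) := by
      rw [Finset.sum_comm]
      exact Finset.sum_congr rfl fun j _ => Finset.sum_congr rfl fun k _ => by rw [hH]
    calc (2:ℂ) • ∑ j, ∑ k, (g j * g k).mulVec (H j k)
        = ∑ j, ∑ k, (g j * g k).mulVec (H j k) + ∑ j, ∑ k, (g k * g j).mulVec (H j k) := by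
          rw [← hswap, two_smul]
      _ = ∑ j, ∑ k, ((g j * g k + g k * g j).mulVec (H j k)) := by
          rw [← Finset.sum_add_distrib]
          exact Finset.sum_congr rfl fun j _ => by
            rw [← Finset.sum_add_distrib]
            exact Finset.sum_congr rfl fun k _ => (Matrix.add_mulVec _ _ _).symm
      _ = ∑ j, ∑ k, (if j = k then ((-2:ℂ) • 1 : Matrix (Fin N) (Fin N) ℂ) else 0).mulVec (H j k) := by
          simp_rw [hgg]
      _ = (2:ℂ) • (-∑ j, H j j) := by
          rw [smul_neg, Finset.smul_sum, ← Finset.sum_neg_distrib]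
          refine Finset.sum_congr rfl fun j _ => ?_
          rw [Finset.sum_eq_single j]
          · rw [if_pos rfl, Matrix.smul_mulVec, Matrix.one_mulVec, neg_smul]
          · intro k _ hk; simp [(Ne.symm hk : ¬ j = k), Matrix.zero_mulVec]
          · simp
  exact smul_right_injective _ (two_ne_zero) h2

lemma dirac_alg {N n : ℕ} (A B : Matrix (Fin N) (Fin N) ℂ)
    (g : Fin n → Matrix (Fin N) (Fin N) ℂ) (m : ℝ) (Fp u : Fin N → ℂ)
    (D : Fin n → Fin N → ℂ) (H : Fin n → Fin n → Fin N → ℂ)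
    (hA2 : A * A = 1)
    (hAg : ∀ j, A * g j * A = -(g j))
    (hgg : ∀ j k, g j * g k + g k * g j
      = if j = k then ((-2 : ℂ) • 1 : Matrix (Fin N) (Fin N) ℂ) else 0)
    (hH : ∀ j k, H j k = H k j) :
    A.mulVec (Complex.I • B.mulVec (A.mulVec (Complex.I • Fp - (Complex.I * m) • u - ∑ j, (g j).mulVec (D j)))
        - (Complex.I * m) • (A.mulVec (Complex.I • Fp - (Complex.I * m) • u - ∑ j, (g j).mulVec (D j)))
        - ∑ j, (g j).mulVec (A.mulVec (Complex.I • B.mulVec (D j) - (Complex.I * m) • D j - ∑ k, (g k).mulVec (H j k))))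
      - (∑ j, H j j) + ((m:ℂ)^2) • u
    = (m : ℂ) • Fp + Complex.I • ∑ j, (g j * B).mulVec (D j)
        - Complex.I • ∑ j, (A * B * A * g j).mulVec (D j)
        + (m:ℂ) • (A * B * A).mulVec u - (A * B * A).mulVec Fp := by
  have hsum : ∀ (M : Matrix (Fin N) (Fin N) ℂ) (f : Fin n → Fin N → ℂ),
      M.mulVec (∑ j, f j) = ∑ j, M.mulVec (f j) := by
    intro M f
    rw [show M.mulVec = fun v => M.mulVecLin v from rfl]
    exact map_sum M.mulVecLin f Finset.univ
  simp only [Matrix.mulVec_sub, Matrix.mulVec_smul, hsum, Matrix.mulVec_mulVec,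
    smul_sub, smul_smul, Finset.sum_sub_distrib, ← Finset.smul_sum, hA2, hAg,
    Matrix.one_mulVec, Matrix.neg_mulVec, neg_mul, smul_neg, Finset.sum_neg_distrib, ← mul_assoc, one_mul]
  rw [dirac_double_sum g H hgg hH]
  match_scalars <;> ring_nf <;> simp [Complex.I_sq]

/-- a `C²`, spatially `2π`-periodic solution of the Dirac equation
`-i Σ_μ γ^μ ∂ψ/∂x^μ + m ψ = F(ψ)` on `(-T,T) × ℝᵈ` solves the Klein–Gordon type equation
`∂²ψ/∂t² − Δψ + m²ψ = G(ψ, ∂ψ)` pointwise. -/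
theorem dirac_implies_klein_gordon (d : ℕ) (hd : 1 ≤ d) (d0 : ℕ)
    (hd0 : d0 = 2 ^ ((d + 1) / 2))
    (γ : Fin (d + 1) → Matrix (Fin d0) (Fin d0) ℂ) (hγ : IsDiracFamily d d0 γ)
    (m : ℝ) (hm : 0 < m) (T : ℝ) (hT : 0 < T)
    (F : (Fin d0 → ℂ) → Fin d0 → ℂ) (F' : (Fin d0 → ℂ) → Matrix (Fin d0) (Fin d0) ℂ)
    (hF : ∀ u : Fin d0 → ℂ,
      HasFDerivAt F (LinearMap.toContinuousLinearMap (Matrix.mulVecLin (F' u))) u)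
    (ψ : ℝ × (Fin d → ℝ) → Fin d0 → ℂ)
    (hψ : ContDiffOn ℝ 2 ψ (Set.Ioo (-T) T ×ˢ (Set.univ : Set (Fin d → ℝ))))
    (hper : ∀ t : ℝ, ∀ x : Fin d → ℝ, ∀ j : Fin d,
      ψ (t, x + Pi.single j (2 * Real.pi)) = ψ (t, x))
    (hdirac : ∀ p ∈ Set.Ioo (-T) T ×ˢ (Set.univ : Set (Fin d → ℝ)),
      (-Complex.I) • ((γ 0).mulVec (ptderiv d d0 ψ p)
          + ∑ j : Fin d, (γ j.succ).mulVec (pxderiv d d0 j ψ p))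
        + (m : ℂ) • ψ p = F (ψ p)) :
    ∀ p ∈ Set.Ioo (-T) T ×ˢ (Set.univ : Set (Fin d → ℝ)),
      ptderiv d d0 (ptderiv d d0 ψ) p
          - (∑ j : Fin d, pxderiv d d0 j (pxderiv d d0 j ψ) p)
          + (((m : ℂ)) ^ 2) • ψ p
        = GTerm d d0 γ m F F' ψ p := by
  intro p hp
  have hU : IsOpen (Set.Ioo (-T) T ×ˢ (Set.univ : Set (Fin d → ℝ))) := isOpen_Ioo.prod isOpen_univ
  set U : Set (ℝ × (Fin d → ℝ)) := Set.Ioo (-T) T ×ˢ (Set.univ : Set (Fin d → ℝ)) with hUdef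
  -- basic matrix identities
  have hA2 : γ 0 * γ 0 = 1 := by
    have h := hγ 0 0
    rw [eta] at h
    simp only [if_pos rfl] at h
    have h2 : (2:ℂ) • (γ 0 * γ 0) = (2:ℂ) • (1 : Matrix (Fin d0) (Fin d0) ℂ) := by
      rw [two_smul, h]; norm_num
    exact smul_right_injective _ (two_ne_zero) h2
  have hanti : ∀ j : Fin d, γ 0 * γ j.succ + γ j.succ * γ 0 = 0 := by
    intro j
    have h := hγ 0 j.succ
    rw [eta, if_neg (Fin.succ_ne_zero j).symm] at h
    simpa using h
  have hAg : ∀ j : Fin d, γ 0 * γ j.succ * γ 0 = -(γ j.succ) := by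
    intro j
    have h1 : γ 0 * γ j.succ = -(γ j.succ * γ 0) :=
      eq_neg_of_add_eq_zero_left (hanti j)
    rw [h1, neg_mul, mul_assoc, hA2, mul_one]
  have hgg : ∀ j k : Fin d, γ j.succ * γ k.succ + γ k.succ * γ j.succ
      = if j = k then ((-2 : ℂ) • 1 : Matrix (Fin d0) (Fin d0) ℂ) else 0 := by
    intro j k
    have h := hγ j.succ k.succ
    rw [eta] at h
    by_cases hjk : j = k
    · subst hjk
      rw [if_pos rfl, if_neg (Fin.succ_ne_zero j)] at h
      rw [if_pos rfl, h]
      norm_num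
    · rw [if_neg (fun hc => hjk (Fin.succ_injective d hc))] at h
      rw [if_neg hjk, h]
      norm_num
  -- differentiability facts
  have hsmooth : ∀ q ∈ U, ContDiffAt ℝ 2 ψ q := fun q hq => (hψ q hq).contDiffAt (hU.mem_nhds hq)
  have hdiffat : ∀ q ∈ U, DifferentiableAt ℝ ψ q :=
    fun q hq => (hsmooth q hq).differentiableAt two_ne_zero
  have hd2 : ContDiffAt ℝ 1 (fderiv ℝ ψ) p := (hsmooth p hp).fderiv_right (le_refl 2)
  have hdiff' : DifferentiableAt ℝ (fderiv ℝ ψ) p := hd2.differentiableAt one_ne_zero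
  have hsym : ∀ v w, fderiv ℝ (fderiv ℝ ψ) p v w = fderiv ℝ (fderiv ℝ ψ) p w v :=
    (hsmooth p hp).isSymmSndFDerivAt (by simp)
  have hL1 : ∀ v w, fderiv ℝ (fun q => fderiv ℝ ψ q v) p w = fderiv ℝ (fderiv ℝ ψ) p w v := by
    intro v w
    rw [fderiv_clm_apply hdiff' (differentiableAt_const v)]
    simp
  -- Step A: the time derivative solved from the Dirac equation, on all of U
  have key0 : ∀ q ∈ U, fderiv ℝ ψ q ((1:ℝ), (0 : Fin d → ℝ))
      = (γ 0).mulVec (Complex.I • F (ψ q) - (Complex.I * m) • ψ q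
          - ∑ j, (γ j.succ).mulVec (fderiv ℝ ψ q ((0:ℝ), Pi.single j 1))) := by
    intro q hq
    have h : (-Complex.I) • ((γ 0).mulVec (fderiv ℝ ψ q ((1:ℝ), (0 : Fin d → ℝ)))
          + ∑ j, (γ j.succ).mulVec (fderiv ℝ ψ q ((0:ℝ), Pi.single j 1)))
        + (m : ℂ) • ψ q = F (ψ q) := hdirac q hq
    have hX : (γ 0).mulVec (fderiv ℝ ψ q ((1:ℝ), (0 : Fin d → ℝ)))
          + ∑ j, (γ j.succ).mulVec (fderiv ℝ ψ q ((0:ℝ), Pi.single j 1))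
        = Complex.I • F (ψ q) - (Complex.I * m) • ψ q := by
      have h2 : (-Complex.I) • ((γ 0).mulVec (fderiv ℝ ψ q ((1:ℝ), (0 : Fin d → ℝ)))
            + ∑ j, (γ j.succ).mulVec (fderiv ℝ ψ q ((0:ℝ), Pi.single j 1)))
          = F (ψ q) - (m : ℂ) • ψ q := by
        rw [← h]; abel
      calc (γ 0).mulVec (fderiv ℝ ψ q ((1:ℝ), (0 : Fin d → ℝ)))
            + ∑ j, (γ j.succ).mulVec (fderiv ℝ ψ q ((0:ℝ), Pi.single j 1))
          = Complex.I • ((-Complex.I) • ((γ 0).mulVec (fderiv ℝ ψ q ((1:ℝ), (0 : Fin d → ℝ)))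
            + ∑ j, (γ j.succ).mulVec (fderiv ℝ ψ q ((0:ℝ), Pi.single j 1)))) := by
            rw [smul_smul, mul_neg, Complex.I_mul_I, neg_neg, one_smul]
        _ = Complex.I • (F (ψ q) - (m : ℂ) • ψ q) := by rw [h2]
        _ = Complex.I • F (ψ q) - (Complex.I * m) • ψ q := by rw [smul_sub, smul_smul]
    have h4 := congrArg (fun v => (γ 0).mulVec v) hX
    simp only [Matrix.mulVec_add, Matrix.mulVec_mulVec, hA2, Matrix.one_mulVec] at h4
    rw [Matrix.mulVec_sub, ← h4]
    abel
  -- eventual equality for the time derivative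
  have hG1ev : (fun q => fderiv ℝ ψ q ((1:ℝ), (0 : Fin d → ℝ)))
      =ᶠ[nhds p] (fun q => (γ 0).mulVec (Complex.I • F (ψ q) - (Complex.I * m) • ψ q
          - ∑ j, (γ j.succ).mulVec (fderiv ℝ ψ q ((0:ℝ), Pi.single j 1)))) := by
    filter_upwards [hU.mem_nhds hp] with q hq using key0 q hq
  -- the derivative of the right-hand side, evaluated in direction w
  have keyD : ∀ w, fderiv ℝ (fun q => fderiv ℝ ψ q ((1:ℝ), (0 : Fin d → ℝ))) p w
      = (γ 0).mulVec (Complex.I • (F' (ψ p)).mulVec (fderiv ℝ ψ p w)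
          - (Complex.I * m) • (fderiv ℝ ψ p w)
          - ∑ j, (γ j.succ).mulVec (fderiv ℝ (fderiv ℝ ψ) p w ((0:ℝ), Pi.single j 1))) := by
    intro w
    rw [Filter.EventuallyEq.fderiv_eq hG1ev]
    have hFc : HasFDerivAt (fun q => F (ψ q)) ((matCLM (F' (ψ p))).comp (fderiv ℝ ψ p)) p :=
      ((hF (ψ p)).restrictScalars ℝ).comp p (hdiffat p hp).hasFDerivAt
    have hev : ∀ v : ℝ × (Fin d → ℝ), HasFDerivAt (fun q => fderiv ℝ ψ q v)
        ((fderiv ℝ ψ p).comp (0 : (ℝ × (Fin d → ℝ)) →L[ℝ] (ℝ × (Fin d → ℝ)))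
          + (fderiv ℝ (fderiv ℝ ψ) p).flip v) p :=
      fun v => hdiff'.hasFDerivAt.clm_apply (hasFDerivAt_const v p)
    have hj : ∀ j : Fin d, HasFDerivAt
        (fun q => (γ j.succ).mulVec (fderiv ℝ ψ q ((0:ℝ), Pi.single j 1)))
        ((matCLM (γ j.succ)).comp
          ((fderiv ℝ ψ p).comp (0 : (ℝ × (Fin d → ℝ)) →L[ℝ] (ℝ × (Fin d → ℝ)))
            + (fderiv ℝ (fderiv ℝ ψ) p).flip ((0:ℝ), Pi.single j 1))) p :=
      fun j => ((matCLM (γ j.succ)).hasFDerivAt).comp p (hev _)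
    have hsumD : HasFDerivAt
        (fun q => ∑ j, (γ j.succ).mulVec (fderiv ℝ ψ q ((0:ℝ), Pi.single j 1)))
        (∑ j, (matCLM (γ j.succ)).comp
          ((fderiv ℝ ψ p).comp (0 : (ℝ × (Fin d → ℝ)) →L[ℝ] (ℝ × (Fin d → ℝ)))
            + (fderiv ℝ (fderiv ℝ ψ) p).flip ((0:ℝ), Pi.single j 1))) p :=
      HasFDerivAt.fun_sum (fun j _ => hj j)
    have hinner : HasFDerivAt
        (fun q => Complex.I • F (ψ q) - (Complex.I * m) • ψ q
          - ∑ j, (γ j.succ).mulVec (fderiv ℝ ψ q ((0:ℝ), Pi.single j 1)))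
        (Complex.I • ((matCLM (F' (ψ p))).comp (fderiv ℝ ψ p))
          - (Complex.I * m) • fderiv ℝ ψ p
          - ∑ j, (matCLM (γ j.succ)).comp
            ((fderiv ℝ ψ p).comp (0 : (ℝ × (Fin d → ℝ)) →L[ℝ] (ℝ × (Fin d → ℝ)))
              + (fderiv ℝ (fderiv ℝ ψ) p).flip ((0:ℝ), Pi.single j 1))) p :=
      ((hFc.const_smul Complex.I).sub
        ((hdiffat p hp).hasFDerivAt.const_smul (Complex.I * (m:ℂ)))).sub hsumD
    have hG : HasFDerivAt
        (fun q => (γ 0).mulVec (Complex.I • F (ψ q) - (Complex.I * m) • ψ q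
          - ∑ j, (γ j.succ).mulVec (fderiv ℝ ψ q ((0:ℝ), Pi.single j 1))))
        ((matCLM (γ 0)).comp
          (Complex.I • ((matCLM (F' (ψ p))).comp (fderiv ℝ ψ p))
            - (Complex.I * m) • fderiv ℝ ψ p
            - ∑ j, (matCLM (γ j.succ)).comp
              ((fderiv ℝ ψ p).comp (0 : (ℝ × (Fin d → ℝ)) →L[ℝ] (ℝ × (Fin d → ℝ)))
                + (fderiv ℝ (fderiv ℝ ψ) p).flip ((0:ℝ), Pi.single j 1)))) p :=
      (matCLM (γ 0)).hasFDerivAt.comp p hinner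
    rw [hG.fderiv]
    simp only [ContinuousLinearMap.comp_apply, ContinuousLinearMap.sub_apply,
      ContinuousLinearMap.smul_apply, ContinuousLinearMap.coe_sum', Finset.sum_apply,
      ContinuousLinearMap.add_apply, ContinuousLinearMap.flip_apply,
      ContinuousLinearMap.zero_apply, map_zero, zero_add, matCLM_apply]
  -- second derivatives
  have hptt : ptderiv d d0 (ptderiv d d0 ψ) p
      = fderiv ℝ (fun q => fderiv ℝ ψ q ((1:ℝ), (0 : Fin d → ℝ))) p ((1:ℝ), (0 : Fin d → ℝ)) := rfl
  have hpxx : ∀ j : Fin d, pxderiv d d0 j (pxderiv d d0 j ψ) p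
      = fderiv ℝ (fun q => fderiv ℝ ψ q ((0:ℝ), Pi.single j 1)) p ((0:ℝ), Pi.single j 1) := fun j => rfl
  have hpx : ∀ j : Fin d, pxderiv d d0 j (pxderiv d d0 j ψ) p
      = fderiv ℝ (fderiv ℝ ψ) p ((0:ℝ), Pi.single j 1) ((0:ℝ), Pi.single j 1) := by
    intro j; rw [hpxx j]; exact hL1 _ _
  have hmix : ∀ j : Fin d, fderiv ℝ (fderiv ℝ ψ) p ((1:ℝ), (0 : Fin d → ℝ)) ((0:ℝ), Pi.single j 1)
      = (γ 0).mulVec (Complex.I • (F' (ψ p)).mulVec (fderiv ℝ ψ p ((0:ℝ), Pi.single j 1))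
          - (Complex.I * m) • (fderiv ℝ ψ p ((0:ℝ), Pi.single j 1))
          - ∑ k, (γ k.succ).mulVec
            (fderiv ℝ (fderiv ℝ ψ) p ((0:ℝ), Pi.single j 1) ((0:ℝ), Pi.single k 1))) := by
    intro j
    rw [hsym ((1:ℝ), (0 : Fin d → ℝ)) ((0:ℝ), Pi.single j 1),
      ← hL1 ((1:ℝ), (0 : Fin d → ℝ)) ((0:ℝ), Pi.single j 1)]
    exact keyD _
  -- assemble
  rw [hptt, keyD ((1:ℝ), (0 : Fin d → ℝ))]
  rw [show (∑ j, (γ j.succ).mulVec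
        (fderiv ℝ (fderiv ℝ ψ) p ((1:ℝ), (0 : Fin d → ℝ)) ((0:ℝ), Pi.single j 1)))
      = ∑ j, (γ j.succ).mulVec ((γ 0).mulVec
          (Complex.I • (F' (ψ p)).mulVec (fderiv ℝ ψ p ((0:ℝ), Pi.single j 1))
          - (Complex.I * m) • (fderiv ℝ ψ p ((0:ℝ), Pi.single j 1))
          - ∑ k, (γ k.succ).mulVec
            (fderiv ℝ (fderiv ℝ ψ) p ((0:ℝ), Pi.single j 1) ((0:ℝ), Pi.single k 1))))
      from Finset.sum_congr rfl fun j _ => by rw [hmix j]]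
  rw [show (∑ j, pxderiv d d0 j (pxderiv d d0 j ψ) p)
      = ∑ j, fderiv ℝ (fderiv ℝ ψ) p ((0:ℝ), Pi.single j 1) ((0:ℝ), Pi.single j 1)
      from Finset.sum_congr rfl fun j _ => hpx j]
  rw [key0 p hp]
  simp only [GTerm, pxderiv]
  exact dirac_alg (γ 0) (F' (ψ p)) (fun j => γ j.succ) m (F (ψ p)) (ψ p)
    (fun j => fderiv ℝ ψ p ((0:ℝ), Pi.single j 1))
    (fun j k => fderiv ℝ (fderiv ℝ ψ) p ((0:ℝ), Pi.single j 1) ((0:ℝ), Pi.single k 1))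
    hA2 hAg hgg (fun j k => hsym _ _)

end
end

section
/- Let d₀ ≥ 1, let r > 0, and let (𝐜_𝐩)_{𝐩 ∈ ℕ^{d₀}, |𝐩| ≥ 1} be vectors in ℂ^{d₀} with Σ_𝐩 |𝐜_𝐩| r^{|𝐩|} < ∞, and define F(u) := Σ_{|𝐩|≥1} 𝐜_𝐩 u^𝐩 for u ∈ ℂ^{d₀} with max_k |u_k| < r. Then for all u¹, u² ∈ ℂ^{d₀} with max_k |u¹_k| < r/4 and max_k |u²_k| < r/4, the identity F(u¹) − F(u²) = Σ_{|𝐩|≥1} Σ_{i=1}^{d₀} Σ_{𝐦+𝐧=(𝐩−e_i)⁺} p_i · (c_{𝐦𝐧}/(|𝐦|+1)) · 𝐜_𝐩 · (u¹−u²)^𝐦 (u²)^𝐧 (u¹_i − u²_i) holds, with the triple series converging absolutely. -/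
open scoped BigOperators

noncomputable section

/-- The multi-index `(𝐩 - e_i)⁺`: the `i`-th entry is `max (p_i - 1) 0`, the others are
unchanged. -/
def subIndex (d0 : ℕ) (p : Fin d0 → ℕ) (i : Fin d0) : Fin d0 → ℕ :=
  fun k => if k = i then p i - 1 else p k

/-- The generic term of the triple series expressing `F(u¹) - F(u²)`:
`p_i · (c_{𝐦𝐧}/(|𝐦|+1)) · 𝐜_𝐩 · (u¹-u²)^𝐦 (u²)^𝐧 (u¹_i - u²_i)` with
`𝐧 = (𝐩-e_i)⁺ - 𝐦` and `c_{𝐦𝐧} = ∏ binom((𝐩-e_i)⁺_k, m_k)`. -/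
def diffSeriesTerm (d0 : ℕ) (c : (Fin d0 → ℕ) → Fin d0 → ℂ) (u1 u2 : Fin d0 → ℂ)
    (p : Fin d0 → ℕ) (i : Fin d0) (m : Fin d0 → ℕ) : Fin d0 → ℂ :=
  ((p i : ℂ) * (∏ k : Fin d0, ((subIndex d0 p i k).choose (m k) : ℂ))
      / (((∑ k : Fin d0, m k : ℕ) : ℂ) + 1)
    * ((∏ k : Fin d0, (u1 k - u2 k) ^ m k)
        * (∏ k : Fin d0, u2 k ^ (subIndex d0 p i k - m k))
        * (u1 i - u2 i))) • c p


def sTerm (d0 : ℕ) (u1 u2 : Fin d0 → ℂ) (p : Fin d0 → ℕ) (i : Fin d0) (m : Fin d0 → ℕ) : ℂ :=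
  (p i : ℂ) * (∏ k : Fin d0, ((subIndex d0 p i k).choose (m k) : ℂ))
      / (((∑ k : Fin d0, m k : ℕ) : ℂ) + 1)
    * ((∏ k : Fin d0, (u1 k - u2 k) ^ m k)
        * (∏ k : Fin d0, u2 k ^ (subIndex d0 p i k - m k))
        * (u1 i - u2 i))


def incr (d0 : ℕ) (m : Fin d0 → ℕ) (i : Fin d0) : Fin d0 → ℕ :=
  fun k => if k = i then m i + 1 else m k


variable {d0 : ℕ}


lemma subIndex_self (p : Fin d0 → ℕ) (i : Fin d0) : subIndex d0 p i i = p i - 1 := by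
  simp [subIndex]

lemma subIndex_ne (p : Fin d0 → ℕ) {i k : Fin d0} (h : k ≠ i) : subIndex d0 p i k = p k := by
  simp [subIndex, h]

lemma incr_self (m : Fin d0 → ℕ) (i : Fin d0) : incr d0 m i i = m i + 1 := by simp [incr]

lemma incr_ne (m : Fin d0 → ℕ) {i k : Fin d0} (h : k ≠ i) : incr d0 m i k = m k := by
  simp [incr, h]

lemma subIndex_incr (m : Fin d0 → ℕ) (i : Fin d0) : subIndex d0 (incr d0 m i) i = m := by
  funext k
  rcases eq_or_ne k i with rfl | hk
  · rw [subIndex_self, incr_self]; omega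
  · rw [subIndex_ne _ hk, incr_ne _ hk]

lemma incr_subIndex (m' : Fin d0 → ℕ) {i : Fin d0} (h : m' i ≠ 0) :
    incr d0 (subIndex d0 m' i) i = m' := by
  funext k
  rcases eq_or_ne k i with rfl | hk
  · rw [incr_self, subIndex_self]; omega
  · rw [incr_ne _ hk, subIndex_ne _ hk]


lemma nat_Iic_eq_range (n : ℕ) : Finset.Iic n = Finset.range (n+1) := by
  ext j; simp [Nat.lt_succ_iff]

lemma pi_Iic_eq_piFinset (q : Fin d0 → ℕ) :
    Finset.Iic q = Fintype.piFinset (fun k => Finset.Iic (q k)) := by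
  ext m
  simp [Fintype.mem_piFinset, Finset.mem_Iic, Pi.le_def]

lemma sum_Iic_prod {M : Type*} [CommSemiring M] (q : Fin d0 → ℕ) (f : Fin d0 → ℕ → M) :
    ∑ m ∈ Finset.Iic q, ∏ k, f k (m k) = ∏ k, ∑ j ∈ Finset.Iic (q k), f k j := by
  rw [pi_Iic_eq_piFinset, Finset.prod_univ_sum]


lemma sum_subIndex (p : Fin d0 → ℕ) (i : Fin d0) (h : 1 ≤ p i) :
    (∑ k, subIndex d0 p i k) + 1 = ∑ k, p k := by
  rw [← Finset.sum_erase_add Finset.univ _ (Finset.mem_univ i),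
      ← Finset.sum_erase_add Finset.univ p (Finset.mem_univ i)]
  have he : ∑ k ∈ Finset.univ.erase i, subIndex d0 p i k
      = ∑ k ∈ Finset.univ.erase i, p k :=
    Finset.sum_congr rfl fun k hk => subIndex_ne _ (Finset.ne_of_mem_erase hk)
  rw [he, subIndex_self]
  omega

lemma abs_sTerm_le (u1 u2 : Fin d0 → ℂ) (ρ : ℝ) (hρ0 : 0 ≤ ρ)
    (hv : ∀ k, ‖u1 k - u2 k‖ ≤ 2*ρ)
    (hu : ∀ k, ‖u2 k‖ ≤ 2*ρ) (p : Fin d0 → ℕ) (i : Fin d0) (m : Fin d0 → ℕ)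
    (hm : m ≤ subIndex d0 p i) :
    ‖sTerm d0 u1 u2 p i m‖
      ≤ (p i : ℝ) * (∏ k, (((subIndex d0 p i k).choose (m k) : ℕ) : ℝ))
          * (2*ρ) ^ ((∑ k, subIndex d0 p i k) + 1) := by
  have h2ρ : (0:ℝ) ≤ 2*ρ := by linarith
  unfold sTerm
  rw [norm_mul, norm_div]
  have ha : ‖(p i : ℂ) * ∏ k, (((subIndex d0 p i k).choose (m k) : ℕ) : ℂ)‖
      = (p i : ℝ) * ∏ k, (((subIndex d0 p i k).choose (m k) : ℕ) : ℝ) := by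
    rw [norm_mul, Complex.norm_natCast, norm_prod]
    congr 1
    exact Finset.prod_congr rfl fun k _ => Complex.norm_natCast _
  have hb : (1:ℝ) ≤ ‖((∑ k, m k : ℕ) : ℂ) + 1‖ := by
    have he : (((∑ k, m k : ℕ) : ℂ) + 1) = (((∑ k, m k) + 1 : ℕ) : ℂ) := by push_cast; ring
    rw [he, Complex.norm_natCast]
    exact_mod_cast Nat.succ_le_succ (Nat.zero_le _)
  have hc : ‖(∏ k, (u1 k - u2 k) ^ m k)
        * (∏ k, u2 k ^ (subIndex d0 p i k - m k)) * (u1 i - u2 i)‖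
      ≤ (2*ρ) ^ ((∑ k, subIndex d0 p i k) + 1) := by
    rw [norm_mul, norm_mul, norm_prod, norm_prod]
    have h1 : ∏ k, ‖(u1 k - u2 k) ^ m k‖ ≤ ∏ k, (2*ρ) ^ m k := by
      refine Finset.prod_le_prod (fun k _ => by positivity) fun k _ => ?_
      rw [norm_pow]
      exact pow_le_pow_left₀ (norm_nonneg _) (hv k) _
    have h2 : ∏ k, ‖u2 k ^ (subIndex d0 p i k - m k)‖
        ≤ ∏ k, (2*ρ) ^ (subIndex d0 p i k - m k) := by
      refine Finset.prod_le_prod (fun k _ => by positivity) fun k _ => ?_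
      rw [norm_pow]
      exact pow_le_pow_left₀ (norm_nonneg _) (hu k) _
    calc (∏ k, ‖(u1 k - u2 k) ^ m k‖)
          * (∏ k, ‖u2 k ^ (subIndex d0 p i k - m k)‖)
          * ‖u1 i - u2 i‖
        ≤ (∏ k, (2*ρ) ^ m k) * (∏ k, (2*ρ) ^ (subIndex d0 p i k - m k)) * (2*ρ) := by
          refine mul_le_mul (mul_le_mul h1 h2 ?_ ?_) (hv i) (norm_nonneg _) ?_
          · exact Finset.prod_nonneg fun k _ => norm_nonneg _
          · exact Finset.prod_nonneg fun k _ => by positivity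
          · positivity
      _ = (2*ρ) ^ ((∑ k, subIndex d0 p i k) + 1) := by
          rw [Finset.prod_pow_eq_pow_sum, Finset.prod_pow_eq_pow_sum, ← pow_add, ← pow_succ]
          congr 1
          rw [← Finset.sum_add_distrib]
          congr 1
          refine Finset.sum_congr rfl fun k _ => ?_
          have h3 : m k ≤ subIndex d0 p i k := hm k
          omega
  calc ‖(p i : ℂ) * ∏ k, (((subIndex d0 p i k).choose (m k) : ℕ) : ℂ)‖
        / ‖((∑ k, m k : ℕ) : ℂ) + 1‖
        * ‖(∏ k, (u1 k - u2 k) ^ m k)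
            * (∏ k, u2 k ^ (subIndex d0 p i k - m k)) * (u1 i - u2 i)‖
      ≤ ‖(p i : ℂ) * ∏ k, (((subIndex d0 p i k).choose (m k) : ℕ) : ℂ)‖ / 1
          * ((2*ρ) ^ ((∑ k, subIndex d0 p i k) + 1)) := by
        refine mul_le_mul ?_ hc (norm_nonneg _) (by positivity)
        exact div_le_div_of_nonneg_left (norm_nonneg _) one_pos hb
    _ = _ := by rw [div_one, ha]


section core
variable (u1 u2 : Fin d0 → ℂ)


lemma step1 (p : Fin d0 → ℕ) (i : Fin d0) :
    ∑ m ∈ Finset.Iic (subIndex d0 p i), sTerm d0 u1 u2 p i m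
      = ∑ m' ∈ Finset.Iic p,
          (if m' i = 0 then 0 else sTerm d0 u1 u2 p i (subIndex d0 m' i)) := by
  by_cases hp : p i = 0
  · refine (Finset.sum_eq_zero ?_).trans (Finset.sum_eq_zero ?_).symm
    · intro m _; simp [sTerm, hp]
    · intro m' hm'
      have h : m' i ≤ p i := Finset.mem_Iic.mp hm' i
      rw [if_pos (by omega)]
  · have hrw : ∀ m' ∈ Finset.Iic p,
        (if m' i = 0 then 0 else sTerm d0 u1 u2 p i (subIndex d0 m' i))
          = (if ¬ (m' i = 0) then sTerm d0 u1 u2 p i (subIndex d0 m' i) else 0) := by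
      intro m' _; rw [ite_not]
    rw [Finset.sum_congr rfl hrw, ← Finset.sum_filter]
    refine Finset.sum_nbij' (fun m => incr d0 m i) (fun m' => subIndex d0 m' i) ?_ ?_ ?_ ?_ ?_
    · intro m hm
      have hm := Finset.mem_Iic.mp hm
      refine Finset.mem_filter.mpr ⟨Finset.mem_Iic.mpr fun k => ?_, by simp [incr_self]⟩
      dsimp only
      rcases eq_or_ne k i with rfl | hk
      · have h1 : m k ≤ p k - 1 := by simpa [subIndex_self] using hm k
        rw [incr_self]; omega
      · have h1 : m k ≤ p k := by simpa [subIndex_ne _ hk] using hm k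
        rw [incr_ne _ hk]; exact h1
    · intro m' hm'
      obtain ⟨hle, _⟩ := Finset.mem_filter.mp hm'
      have hle := Finset.mem_Iic.mp hle
      refine Finset.mem_Iic.mpr fun k => ?_
      dsimp only
      rcases eq_or_ne k i with rfl | hk
      · rw [subIndex_self, subIndex_self]
        have h2 : m' k ≤ p k := hle k
        omega
      · rw [subIndex_ne _ hk, subIndex_ne _ hk]; exact hle k
    · intro m _; exact subIndex_incr m i
    · intro m' hm'
      exact incr_subIndex m' (Finset.mem_filter.mp hm').2
    · intro m _
      rw [subIndex_incr]


lemma multiadd (a b : Fin d0 → ℂ) (p : Fin d0 → ℕ) :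
    ∏ k, (a k + b k) ^ p k
      = ∑ m ∈ Finset.Iic p, (∏ k, ((p k).choose (m k) : ℂ))
          * ((∏ k, a k ^ m k) * (∏ k, b k ^ (p k - m k))) := by
  have h : ∀ k : Fin d0, (a k + b k) ^ p k
      = ∑ j ∈ Finset.Iic (p k), ((p k).choose j : ℂ) * (a k ^ j * b k ^ (p k - j)) := by
    intro k
    rw [nat_Iic_eq_range, add_pow]
    exact Finset.sum_congr rfl fun j _ => by ring
  rw [Finset.prod_congr rfl fun k _ => h k, ← sum_Iic_prod]
  exact Finset.sum_congr rfl fun m _ => by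
    rw [Finset.prod_mul_distrib, Finset.prod_mul_distrib]


lemma tpoint (p m' : Fin d0 → ℕ) (hm' : m' ≤ p) (i : Fin d0) :
    (if m' i = 0 then 0 else sTerm d0 u1 u2 p i (subIndex d0 m' i))
      = (m' i : ℂ) / ((∑ k, m' k : ℕ) : ℂ)
        * ((∏ k, ((p k).choose (m' k) : ℂ))
            * ((∏ k, (u1 k - u2 k) ^ m' k) * (∏ k, u2 k ^ (p k - m' k)))) := by
  by_cases h : m' i = 0
  · simp [h]
  · rw [if_neg h]
    have hmi : 1 ≤ m' i := by omega
    have hpi : 1 ≤ p i := le_trans hmi (hm' i)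
    have F1 : (p i) * ∏ k, (subIndex d0 p i k).choose (subIndex d0 m' i k)
        = (m' i) * ∏ k, (p k).choose (m' k) := by
      rw [← Finset.mul_prod_erase Finset.univ _ (Finset.mem_univ i),
          ← Finset.mul_prod_erase Finset.univ (fun k => (p k).choose (m' k)) (Finset.mem_univ i)]
      have he : ∏ k ∈ Finset.univ.erase i, (subIndex d0 p i k).choose (subIndex d0 m' i k)
          = ∏ k ∈ Finset.univ.erase i, (p k).choose (m' k) :=
        Finset.prod_congr rfl fun k hk => by
          rw [subIndex_ne _ (Finset.ne_of_mem_erase hk),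
              subIndex_ne _ (Finset.ne_of_mem_erase hk)]
      rw [he, subIndex_self, subIndex_self, ← mul_assoc, ← mul_assoc]
      congr 1
      have hs := Nat.add_one_mul_choose_eq (p i - 1) (m' i - 1)
      have e1 : p i - 1 + 1 = p i := by omega
      have e2 : m' i - 1 + 1 = m' i := by omega
      rw [e1, e2] at hs
      rw [hs, Nat.mul_comm]
    have F2 : (∑ k, subIndex d0 m' i k) + 1 = ∑ k, m' k := by
      rw [← Finset.sum_erase_add Finset.univ _ (Finset.mem_univ i),
          ← Finset.sum_erase_add Finset.univ m' (Finset.mem_univ i)]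
      have he : ∑ k ∈ Finset.univ.erase i, subIndex d0 m' i k
          = ∑ k ∈ Finset.univ.erase i, m' k :=
        Finset.sum_congr rfl fun k hk => subIndex_ne _ (Finset.ne_of_mem_erase hk)
      rw [he, subIndex_self]
      omega
    have F3 : (∏ k, (u1 k - u2 k) ^ (subIndex d0 m' i k)) * (u1 i - u2 i)
        = ∏ k, (u1 k - u2 k) ^ m' k := by
      rw [← Finset.prod_erase_mul Finset.univ _ (Finset.mem_univ i),
          ← Finset.prod_erase_mul Finset.univ (fun k => (u1 k - u2 k) ^ m' k)
            (Finset.mem_univ i)]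
      have he : ∏ k ∈ Finset.univ.erase i, (u1 k - u2 k) ^ (subIndex d0 m' i k)
          = ∏ k ∈ Finset.univ.erase i, (u1 k - u2 k) ^ m' k :=
        Finset.prod_congr rfl fun k hk => by
          rw [subIndex_ne _ (Finset.ne_of_mem_erase hk)]
      rw [he, subIndex_self, mul_assoc, ← pow_succ]
      congr 2
      omega
    have F4 : ∀ k, subIndex d0 p i k - subIndex d0 m' i k = p k - m' k := by
      intro k
      rcases eq_or_ne k i with rfl | hk
      · rw [subIndex_self, subIndex_self]; omega
      · rw [subIndex_ne _ hk, subIndex_ne _ hk]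
    have F1C : (p i : ℂ) * ∏ k, (((subIndex d0 p i k).choose (subIndex d0 m' i k) : ℕ) : ℂ)
        = (m' i : ℂ) * ∏ k, (((p k).choose (m' k) : ℕ) : ℂ) := by
      exact_mod_cast F1
    have F2C : ((∑ k, subIndex d0 m' i k : ℕ) : ℂ) + 1 = ((∑ k, m' k : ℕ) : ℂ) := by
      exact_mod_cast F2
    have F4C : (∏ k, u2 k ^ (subIndex d0 p i k - subIndex d0 m' i k))
        = ∏ k, u2 k ^ (p k - m' k) :=
      Finset.prod_congr rfl fun k _ => by rw [F4 k]
    unfold sTerm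
    rw [F1C, F2C, F4C]
    rw [show (∏ k, (u1 k - u2 k) ^ (subIndex d0 m' i k)) * (∏ k, u2 k ^ (p k - m' k))
          * (u1 i - u2 i)
        = (∏ k, (u1 k - u2 k) ^ m' k) * (∏ k, u2 k ^ (p k - m' k)) from by
      rw [← F3]; ring]
    ring

lemma step2 (p m' : Fin d0 → ℕ) (hm' : m' ≤ p) :
    ∑ i, (if m' i = 0 then 0 else sTerm d0 u1 u2 p i (subIndex d0 m' i))
      = if m' = 0 then (0:ℂ) else
          (∏ k, ((p k).choose (m' k) : ℂ))
            * ((∏ k, (u1 k - u2 k) ^ m' k) * (∏ k, u2 k ^ (p k - m' k))) := by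
  rw [Finset.sum_congr rfl (fun i _ => tpoint u1 u2 p m' hm' i), ← Finset.sum_mul,
    ← Finset.sum_div, ← Nat.cast_sum]
  by_cases h0 : m' = 0
  · simp [h0]
  · rw [if_neg h0]
    have hS : (∑ k, m' k) ≠ 0 := by
      intro h
      apply h0
      funext k
      have := (Finset.sum_eq_zero_iff.mp h) k (Finset.mem_univ k)
      simpa using this
    rw [div_self (Nat.cast_ne_zero.mpr hS), one_mul]

lemma key (p : Fin d0 → ℕ) :
    ∑ i, ∑ m ∈ Finset.Iic (subIndex d0 p i), sTerm d0 u1 u2 p i m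
      = (∏ k, u1 k ^ p k) - ∏ k, u2 k ^ p k := by
  rw [Finset.sum_congr rfl (fun i _ => step1 u1 u2 p i), Finset.sum_comm,
    Finset.sum_congr rfl (fun m' hm' => step2 u1 u2 p m' (Finset.mem_Iic.mp hm'))]
  have expand : ∏ k, u1 k ^ p k
      = ∑ m ∈ Finset.Iic p, (∏ k, ((p k).choose (m k):ℂ))
          * ((∏ k, (u1 k - u2 k) ^ m k) * (∏ k, u2 k ^ (p k - m k))) := by
    rw [show (∏ k, u1 k ^ p k) = ∏ k, ((u1 k - u2 k) + u2 k) ^ p k from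
      Finset.prod_congr rfl fun k _ => by ring_nf]
    exact multiadd _ _ p
  have h0mem : (0 : Fin d0 → ℕ) ∈ Finset.Iic p := Finset.mem_Iic.mpr fun k => Nat.zero_le _
  have hzero : (∑ m ∈ Finset.Iic p, if m = 0 then
      (∏ k, ((p k).choose (m k):ℂ))
          * ((∏ k, (u1 k - u2 k) ^ m k) * (∏ k, u2 k ^ (p k - m k))) else 0)
      = ∏ k, u2 k ^ p k := by
    rw [Finset.sum_ite_eq' (Finset.Iic p) (0 : Fin d0 → ℕ), if_pos h0mem]
    simp
  have hsplit : (∑ m ∈ Finset.Iic p, if m = 0 then (0:ℂ) else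
        (∏ k, ((p k).choose (m k):ℂ))
          * ((∏ k, (u1 k - u2 k) ^ m k) * (∏ k, u2 k ^ (p k - m k))))
      + (∑ m ∈ Finset.Iic p, if m = 0 then
        (∏ k, ((p k).choose (m k):ℂ))
          * ((∏ k, (u1 k - u2 k) ^ m k) * (∏ k, u2 k ^ (p k - m k))) else 0)
      = ∑ m ∈ Finset.Iic p, (∏ k, ((p k).choose (m k):ℂ))
          * ((∏ k, (u1 k - u2 k) ^ m k) * (∏ k, u2 k ^ (p k - m k))) := by
    rw [← Finset.sum_add_distrib]
    exact Finset.sum_congr rfl fun m _ => by by_cases h : m = 0 <;> simp [h]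
  rw [hzero] at hsplit
  rw [expand, ← hsplit]
  ring


lemma sum_abs_sTerm_le (ρ : ℝ) (hρ0 : 0 ≤ ρ)
    (hv : ∀ k, ‖u1 k - u2 k‖ ≤ 2*ρ)
    (hu : ∀ k, ‖u2 k‖ ≤ 2*ρ) (p : Fin d0 → ℕ) (i : Fin d0) :
    ∑ m ∈ Finset.Iic (subIndex d0 p i), ‖sTerm d0 u1 u2 p i m‖
      ≤ (p i : ℝ) * (4*ρ) ^ (∑ k, p k) := by
  by_cases hp : p i = 0
  · have hz : ∀ m ∈ Finset.Iic (subIndex d0 p i), ‖sTerm d0 u1 u2 p i m‖ = 0 :=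
      fun m _ => by simp [sTerm, hp]
    rw [Finset.sum_eq_zero hz, hp]
    simp
  · have hpi : 1 ≤ p i := by omega
    have h2ρ : (0:ℝ) ≤ 2*ρ := by linarith
    have hn : (∑ k, subIndex d0 p i k) + 1 = ∑ k, p k := sum_subIndex p i hpi
    calc ∑ m ∈ Finset.Iic (subIndex d0 p i), ‖sTerm d0 u1 u2 p i m‖
        ≤ ∑ m ∈ Finset.Iic (subIndex d0 p i),
            (p i : ℝ) * (∏ k, (((subIndex d0 p i k).choose (m k) : ℕ) : ℝ))
              * (2*ρ) ^ ((∑ k, subIndex d0 p i k) + 1) :=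
          Finset.sum_le_sum fun m hm =>
            abs_sTerm_le u1 u2 ρ hρ0 hv hu p i m (Finset.mem_Iic.mp hm)
      _ = (p i : ℝ) * (∑ m ∈ Finset.Iic (subIndex d0 p i),
              ∏ k, (((subIndex d0 p i k).choose (m k) : ℕ) : ℝ))
            * (2*ρ) ^ ((∑ k, subIndex d0 p i k) + 1) := by
          rw [← Finset.sum_mul, ← Finset.mul_sum]
      _ = (p i : ℝ) * (2:ℝ) ^ (∑ k, subIndex d0 p i k)
            * (2*ρ) ^ ((∑ k, subIndex d0 p i k) + 1) := by
          congr 2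
          rw [sum_Iic_prod (subIndex d0 p i) (fun k j => (((subIndex d0 p i k).choose j : ℕ) : ℝ))]
          rw [show ∏ k, (∑ j ∈ Finset.Iic (subIndex d0 p i k), ((subIndex d0 p i k).choose j : ℝ))
              = ∏ k, (2:ℝ) ^ (subIndex d0 p i k) from Finset.prod_congr rfl fun k _ => by
            rw [nat_Iic_eq_range]
            exact_mod_cast Nat.sum_range_choose (subIndex d0 p i k)]
          rw [Finset.prod_pow_eq_pow_sum]
      _ ≤ (p i : ℝ) * (4*ρ) ^ (∑ k, p k) := by
          rw [← hn, mul_assoc]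
          refine mul_le_mul_of_nonneg_left ?_ (Nat.cast_nonneg _)
          rw [pow_succ, pow_succ, ← mul_assoc,
            show (2:ℝ) ^ (∑ k, subIndex d0 p i k) * (2*ρ) ^ (∑ k, subIndex d0 p i k)
              = (4*ρ) ^ (∑ k, subIndex d0 p i k) from by rw [← mul_pow]; ring_nf]
          refine mul_le_mul_of_nonneg_left (by linarith) (pow_nonneg (by linarith) _)


end core


lemma exists_fin_bound {d0 : ℕ} (hd0 : 1 ≤ d0) (a : ℝ) (g : Fin d0 → ℝ)
    (hg : ∀ k, g k < a) : ∃ ρ : ℝ, ρ < a ∧ ∀ k, g k ≤ ρ := by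
  have hne : (Finset.univ : Finset (Fin d0)).Nonempty := ⟨⟨0, hd0⟩, Finset.mem_univ _⟩
  refine ⟨Finset.univ.sup' hne g, ?_, ?_⟩
  · rw [Finset.sup'_lt_iff]
    exact fun k _ => hg k
  · exact fun k => Finset.le_sup' g (Finset.mem_univ k)

/-- for `F(u) = Σ_{|𝐩|≥1} 𝐜_𝐩 u^𝐩` with coefficients summable at radius `r`, and
`u¹, u²` of sup-norm `< r/4`, the difference `F(u¹) - F(u²)` equals the absolutely convergent
triple series `Σ_𝐩 Σ_i Σ_{𝐦+𝐧=(𝐩-e_i)⁺} p_i (c_{𝐦𝐧}/(|𝐦|+1)) 𝐜_𝐩 (u¹-u²)^𝐦 (u²)^𝐧 (u¹_i-u²_i)`. -/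
theorem power_series_difference_formula (d0 : ℕ) (hd0 : 1 ≤ d0) (r : ℝ) (hr : 0 < r)
    (c : (Fin d0 → ℕ) → Fin d0 → ℂ) (hc0 : c 0 = 0)
    (hsum : Summable (fun p : Fin d0 → ℕ => ‖c p‖ * r ^ (∑ k : Fin d0, p k)))
    (u1 u2 : Fin d0 → ℂ)
    (hu1 : ∀ k : Fin d0, ‖u1 k‖ < r / 4)
    (hu2 : ∀ k : Fin d0, ‖u2 k‖ < r / 4) :
    ((∑' p : Fin d0 → ℕ, (∏ k : Fin d0, u1 k ^ p k) • c p)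
        - (∑' p : Fin d0 → ℕ, (∏ k : Fin d0, u2 k ^ p k) • c p)
      = ∑' p : Fin d0 → ℕ, ∑ i : Fin d0, ∑ m ∈ Finset.Iic (subIndex d0 p i),
          diffSeriesTerm d0 c u1 u2 p i m) ∧
    Summable (fun p : Fin d0 → ℕ => ∑ i : Fin d0, ∑ m ∈ Finset.Iic (subIndex d0 p i),
      ‖diffSeriesTerm d0 c u1 u2 p i m‖) := by
  obtain ⟨ρ, hρr, hρle⟩ := exists_fin_bound hd0 (r/4)
    (fun k => max (‖u1 k‖) (‖u2 k‖))
    (fun k => max_lt (hu1 k) (hu2 k))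
  have hρ1 : ∀ k, ‖u1 k‖ ≤ ρ := fun k => le_trans (le_max_left _ _) (hρle k)
  have hρ2 : ∀ k, ‖u2 k‖ ≤ ρ := fun k => le_trans (le_max_right _ _) (hρle k)
  have hρ0 : 0 ≤ ρ := le_trans (norm_nonneg _) (hρ1 ⟨0, hd0⟩)
  have hv : ∀ k, ‖u1 k - u2 k‖ ≤ 2*ρ := fun k => by
    calc ‖u1 k - u2 k‖ = ‖u1 k - u2 k‖ := rfl
      _ ≤ ‖u1 k‖ + ‖u2 k‖ := norm_sub_le _ _
      _ ≤ ρ + ρ := add_le_add (hρ1 k) (hρ2 k)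
      _ = 2*ρ := by ring
  have hu2ρ : ∀ k, ‖u2 k‖ ≤ 2*ρ := fun k => le_trans (hρ2 k) (by linarith)
  have hθ0 : 0 ≤ 4*ρ/r := div_nonneg (by linarith) hr.le
  have hθ1 : 4*ρ/r < 1 := by rw [div_lt_one hr]; linarith
  have hgeo : Summable (fun n : ℕ => (n:ℝ) * (4*ρ/r) ^ n) := by
    simpa using summable_pow_mul_geometric_of_norm_lt_one 1
      (r := (4*ρ/r : ℝ)) (by rwa [Real.norm_eq_abs, abs_of_nonneg hθ0])
  obtain ⟨C, hC⟩ := hgeo.tendsto_atTop_zero.bddAbove_range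
  have hCn : ∀ n : ℕ, (n:ℝ) * (4*ρ)^n ≤ C * r^n := fun n => by
    have h4 : (4*ρ : ℝ) = (4*ρ/r) * r := by field_simp
    rw [h4, mul_pow, ← mul_assoc]
    exact mul_le_mul_of_nonneg_right (hC (Set.mem_range_self n)) (pow_nonneg hr.le n)
  have hterm_eq : ∀ p i m, diffSeriesTerm d0 c u1 u2 p i m = sTerm d0 u1 u2 p i m • c p :=
    fun _ _ _ => rfl
  have hbound : ∀ p : Fin d0 → ℕ,
      ∑ i : Fin d0, ∑ m ∈ Finset.Iic (subIndex d0 p i), ‖diffSeriesTerm d0 c u1 u2 p i m‖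
        ≤ C * (‖c p‖ * r ^ (∑ k : Fin d0, p k)) := fun p => by
    calc ∑ i : Fin d0, ∑ m ∈ Finset.Iic (subIndex d0 p i), ‖diffSeriesTerm d0 c u1 u2 p i m‖
        = ∑ i : Fin d0, (∑ m ∈ Finset.Iic (subIndex d0 p i),
            ‖sTerm d0 u1 u2 p i m‖) * ‖c p‖ := by
          refine Finset.sum_congr rfl fun i _ => ?_
          rw [Finset.sum_mul]
          refine Finset.sum_congr rfl fun m _ => ?_
          rw [hterm_eq, norm_smul]
      _ ≤ ∑ i : Fin d0, ((p i : ℝ) * (4*ρ)^(∑ k : Fin d0, p k)) * ‖c p‖ :=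
          Finset.sum_le_sum fun i _ => mul_le_mul_of_nonneg_right
            (sum_abs_sTerm_le u1 u2 ρ hρ0 hv hu2ρ p i) (norm_nonneg _)
      _ = ((∑ i : Fin d0, (p i : ℝ)) * (4*ρ)^(∑ k : Fin d0, p k)) * ‖c p‖ := by
          rw [← Finset.sum_mul, ← Finset.sum_mul]
      _ = (((∑ k : Fin d0, p k : ℕ):ℝ) * (4*ρ)^(∑ k : Fin d0, p k)) * ‖c p‖ := by
          rw [Nat.cast_sum]
      _ ≤ (C * r^(∑ k : Fin d0, p k)) * ‖c p‖ :=
          mul_le_mul_of_nonneg_right (hCn _) (norm_nonneg _)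
      _ = C * (‖c p‖ * r ^ (∑ k : Fin d0, p k)) := by ring
  have hS2 : Summable (fun p : Fin d0 → ℕ => ∑ i : Fin d0,
      ∑ m ∈ Finset.Iic (subIndex d0 p i), ‖diffSeriesTerm d0 c u1 u2 p i m‖) :=
    Summable.of_nonneg_of_le
      (fun p => Finset.sum_nonneg fun i _ => Finset.sum_nonneg fun m _ => norm_nonneg _)
      hbound (hsum.mul_left C)
  have hX : ∀ u : Fin d0 → ℂ, (∀ k, ‖u k‖ < r/4) →
      Summable (fun p : Fin d0 → ℕ => (∏ k : Fin d0, u k ^ p k) • c p) := by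
    intro u hu
    refine Summable.of_norm_bounded hsum fun p => ?_
    calc ‖(∏ k : Fin d0, u k ^ p k) • c p‖
        = (∏ k : Fin d0, ‖u k‖ ^ p k) * ‖c p‖ := by
          rw [norm_smul, norm_prod]
          congr 1
          exact Finset.prod_congr rfl fun k _ => norm_pow _ _
      _ ≤ (∏ k : Fin d0, r ^ p k) * ‖c p‖ := by
          refine mul_le_mul_of_nonneg_right (Finset.prod_le_prod
            (fun k _ => by positivity)
            (fun k _ => pow_le_pow_left₀ (norm_nonneg _)
              (le_of_lt (lt_of_lt_of_le (hu k) (by linarith))) _)) (norm_nonneg _)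
      _ = ‖c p‖ * r ^ (∑ k : Fin d0, p k) := by
          rw [Finset.prod_pow_eq_pow_sum]; ring
  refine ⟨?_, hS2⟩
  rw [← Summable.tsum_sub (hX u1 hu1) (hX u2 hu2)]
  refine tsum_congr fun p => ?_
  rw [← sub_smul, ← key u1 u2 p, Finset.sum_smul]
  exact Finset.sum_congr rfl fun i _ => Finset.sum_smul

end
end
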